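/- Let q : ℝ → ℝ be continuous and let 0 ≤ t⁻ < t⁺ ≤ 2π satisfy θ_q(t⁺) < θ_q(t⁻) + π. Let ℓ₁, ℓ₂, ℓ₃ be bumps whose supports are pairwise disjoint closed subintervals of [t⁻, t⁺]. Then the three matrices Mᵢ = ∫₀^{2π} ℓᵢ(t)·Φ_q(t)⁻¹·N₀·Φ_q(t) dt, i = 1,2,3, are linearly independent in M₂(ℝ). -/

import Mathlib

open Real Set Matrix

open MeasureTheory intervalIntegral


lemma ftc_cont {f : ℝ → ℝ} (hf : Continuous f) (b : ℝ) :
    HasDerivAt (fun u => ∫ x in (0:ℝ)..u, f x) (f b) b :=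
  intervalIntegral.integral_hasDerivAt_right (hf.intervalIntegrable _ _)
    (hf.stronglyMeasurableAtFilter _ _) hf.continuousAt

lemma integral_pos_of_bump {f g : ℝ → ℝ} (hfc : Continuous f) (hf0 : ∀ x, 0 ≤ f x)
    (hfne : f ≠ 0) (hsupp : tsupport f ⊆ Icc 0 (2*π))
    (hgc : Continuous g) (hg : ∀ x ∈ tsupport f, 0 < g x) :
    0 < ∫ x in (0:ℝ)..(2*π), f x * g x := by
  have h2π : (0:ℝ) < 2*π := by positivity
  have hnn : ∀ x, 0 ≤ f x * g x := by
    intro x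
    by_cases hx : f x = 0
    · simp [hx]
    · have hxm : x ∈ tsupport f := subset_tsupport f hx
      exact mul_nonneg (hf0 x) (hg x hxm).le
  obtain ⟨x₀, hx₀⟩ : ∃ x, f x ≠ 0 := Function.ne_iff.mp hfne
  have hx₀m : x₀ ∈ tsupport f := subset_tsupport f hx₀
  have hx₀p : 0 < f x₀ * g x₀ := mul_pos ((hf0 x₀).lt_of_ne (Ne.symm hx₀)) (hg x₀ hx₀m)
  set U : Set ℝ := {x | 0 < f x * g x} with hU
  have hUopen : IsOpen U := isOpen_lt continuous_const (hfc.mul hgc)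
  have hx₀U : x₀ ∈ U := hx₀p
  -- U meets Ioo 0 (2π)
  have hcl : x₀ ∈ closure (Ioo (0:ℝ) (2*π)) := by
    rw [closure_Ioo h2π.ne]
    exact hsupp hx₀m
  have hmeets : (U ∩ Ioo 0 (2*π)).Nonempty := by
    rcases mem_closure_iff.mp hcl U hUopen hx₀U with ⟨y, hyU, hyI⟩
    exact ⟨y, hyU, hyI⟩
  have hmeas : 0 < volume (U ∩ Ioo 0 (2*π)) :=
    (hUopen.inter isOpen_Ioo).measure_pos volume hmeets
  rw [intervalIntegral.integral_of_le h2π.le]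
  rw [MeasureTheory.setIntegral_pos_iff_support_of_nonneg_ae
      (Filter.Eventually.of_forall hnn : (0:ℝ → ℝ) ≤ᵐ[volume.restrict (Ioc 0 (2*π))] _)
      ((hfc.mul hgc).integrableOn_Ioc)]
  refine hmeas.trans_le (measure_mono ?_)
  rintro y ⟨hyU, hyI⟩
  exact ⟨ne_of_gt hyU, Ioo_subset_Ioc_self hyI⟩

lemma integral_comb3 (f g1 g2 g3 h : ℝ → ℝ) (α β γ : ℝ)
    (hf : Continuous f) (h1 : Continuous g1) (h2 : Continuous g2) (h3 : Continuous g3)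
    (hcong : ∀ t, h t = α * (f t * g1 t) + β * (f t * g2 t) + γ * (f t * g3 t)) :
    ∫ t in (0:ℝ)..(2*π), h t =
      α * (∫ t in (0:ℝ)..(2*π), f t * g1 t) + β * (∫ t in (0:ℝ)..(2*π), f t * g2 t)
        + γ * (∫ t in (0:ℝ)..(2*π), f t * g3 t) := by
  have i1 : IntervalIntegrable (fun t => α * (f t * g1 t)) volume 0 (2*π) :=
    (continuous_const.mul (hf.mul h1)).intervalIntegrable _ _
  have i2 : IntervalIntegrable (fun t => β * (f t * g2 t)) volume 0 (2*π) :=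
    (continuous_const.mul (hf.mul h2)).intervalIntegrable _ _
  have i3 : IntervalIntegrable (fun t => γ * (f t * g3 t)) volume 0 (2*π) :=
    (continuous_const.mul (hf.mul h3)).intervalIntegrable _ _
  simp_rw [hcong]
  rw [intervalIntegral.integral_add (i1.add i2) i3, intervalIntegral.integral_add i1 i2,
    intervalIntegral.integral_const_mul, intervalIntegral.integral_const_mul,
    intervalIntegral.integral_const_mul]


/-- A bump: a smooth nonnegative function, not identically zero, whose support is a
closed subinterval of `I`. -/
def IsBump (ℓ : ℝ → ℝ) (I : Set ℝ) : Prop :=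
  ContDiff ℝ (⊤ : ℕ∞) ℓ ∧ (∀ x, 0 ≤ ℓ x) ∧ ℓ ≠ 0 ∧
    ∃ a b : ℝ, a ≤ b ∧ Icc a b ⊆ I ∧ tsupport ℓ = Icc a b

/-- The matrix `N₀ = [[0,0],[1,0]]`. -/
def N0 : Matrix (Fin 2) (Fin 2) ℝ := !![0, 0; 1, 0]

/-- The matrix `∫₀^{2π} w(t)·Φ(t)⁻¹·N₀·Φ(t) dt`, computed entrywise. -/
noncomputable def monInt (w : ℝ → ℝ) (Φ : ℝ → Matrix (Fin 2) (Fin 2) ℝ) :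
    Matrix (Fin 2) (Fin 2) ℝ :=
  Matrix.of fun i j : Fin 2 =>
    ∫ t in (0:ℝ)..(2 * Real.pi), w t * (((Φ t)⁻¹ * N0 * Φ t) i j)

set_option maxHeartbeats 2000000 in
/-- Lemma 2.2(b). If `θ_q(t⁺) < θ_q(t⁻) + π` and `ℓ₁, ℓ₂, ℓ₃` are bumps
with pairwise disjoint supports in `[t⁻, t⁺]`, then the matrices
`Mᵢ = ∫₀^{2π} ℓᵢ(t)·Φ_q(t)⁻¹·N₀·Φ_q(t) dt` are linearly independent in `M₂(ℝ)`. -/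
theorem stmt_2 (q : ℝ → ℝ) (hq : Continuous q)
    -- `Φ` is the fundamental matrix of the potential `q`:
    (Φ : ℝ → Matrix (Fin 2) (Fin 2) ℝ)
    (hΦ0 : Φ 0 = 1)
    (hΦ : ∀ t : ℝ, ∀ i j, HasDerivAt (fun s => Φ s i j) ((!![0, 1; q t, 0] * Φ t) i j) t)
    -- `θ` is the continuous argument lift of the first row of `Φ`:
    (θ : ℝ → ℝ) (hθc : ContinuousOn θ (Icc 0 (2 * π))) (hθ0 : θ 0 = 0)
    (hpolar : ∀ t ∈ Icc (0:ℝ) (2 * π),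
      Φ t 0 0 = Real.sqrt ((Φ t 0 0) ^ 2 + (Φ t 0 1) ^ 2) * Real.cos (θ t) ∧
      Φ t 0 1 = Real.sqrt ((Φ t 0 0) ^ 2 + (Φ t 0 1) ^ 2) * Real.sin (θ t))
    (tm tp : ℝ) (htm : 0 ≤ tm) (htmp : tm < tp) (htp : tp ≤ 2 * π)
    (hθπ : θ tp < θ tm + π)
    (ℓ₁ ℓ₂ ℓ₃ : ℝ → ℝ)
    (hℓ₁ : IsBump ℓ₁ (Icc tm tp)) (hℓ₂ : IsBump ℓ₂ (Icc tm tp))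
    (hℓ₃ : IsBump ℓ₃ (Icc tm tp))
    (hd₁₂ : Disjoint (tsupport ℓ₁) (tsupport ℓ₂))
    (hd₁₃ : Disjoint (tsupport ℓ₁) (tsupport ℓ₃))
    (hd₂₃ : Disjoint (tsupport ℓ₂) (tsupport ℓ₃)) :
    LinearIndependent ℝ ![monInt ℓ₁ Φ, monInt ℓ₂ Φ, monInt ℓ₃ Φ] := by
  -- derivatives of entries
  have hv1 : ∀ t, HasDerivAt (fun s => Φ s 0 0) (Φ t 1 0) t := by
    intro t
    have := hΦ t 0 0
    simpa [Matrix.mul_apply, Fin.sum_univ_two] using this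
  have hv2 : ∀ t, HasDerivAt (fun s => Φ s 0 1) (Φ t 1 1) t := by
    intro t; have := hΦ t 0 1
    simpa [Matrix.mul_apply, Fin.sum_univ_two] using this
  have hv1' : ∀ t, HasDerivAt (fun s => Φ s 1 0) (q t * Φ t 0 0) t := by
    intro t; have := hΦ t 1 0
    simpa [Matrix.mul_apply, Fin.sum_univ_two] using this
  have hv2' : ∀ t, HasDerivAt (fun s => Φ s 1 1) (q t * Φ t 0 1) t := by
    intro t; have := hΦ t 1 1
    simpa [Matrix.mul_apply, Fin.sum_univ_two] using this
  have cv1 : Continuous (fun t => Φ t 0 0) :=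
    continuous_iff_continuousAt.mpr fun t => (hv1 t).continuousAt
  have cv2 : Continuous (fun t => Φ t 0 1) :=
    continuous_iff_continuousAt.mpr fun t => (hv2 t).continuousAt
  have cv1' : Continuous (fun t => Φ t 1 0) :=
    continuous_iff_continuousAt.mpr fun t => (hv1' t).continuousAt
  have cv2' : Continuous (fun t => Φ t 1 1) :=
    continuous_iff_continuousAt.mpr fun t => (hv2' t).continuousAt
  -- Wronskian
  set W : ℝ → ℝ := fun t => Φ t 0 0 * Φ t 1 1 - Φ t 0 1 * Φ t 1 0 with hWdef
  have hWd : ∀ t, HasDerivAt W 0 t := by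
    intro t
    have h := ((hv1 t).mul (hv2' t)).sub ((hv2 t).mul (hv1' t))
    convert h using 1 <;> try with_reducible_and_instances rfl
    ring
  have hW : ∀ t, W t = 1 := by
    intro t
    have hconst : W t = W 0 :=
      is_const_of_deriv_eq_zero (fun x => (hWd x).differentiableAt)
        (fun x => (hWd x).deriv) t 0
    rw [hconst, hWdef]
    simp [hΦ0, Matrix.one_apply]
  -- r² > 0
  set r2 : ℝ → ℝ := fun t => Φ t 0 0 ^ 2 + Φ t 0 1 ^ 2 with hr2def
  have hr2 : ∀ t, 0 < r2 t := by
    intro t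
    rcases lt_or_eq_of_le (by positivity : (0:ℝ) ≤ r2 t) with h | h
    · exact h
    · exfalso
      rw [hr2def] at h
      simp only at h
      have h1 : Φ t 0 0 = 0 := by nlinarith [sq_nonneg (Φ t 0 0), sq_nonneg (Φ t 0 1)]
      have h2 : Φ t 0 1 = 0 := by nlinarith [sq_nonneg (Φ t 0 0), sq_nonneg (Φ t 0 1)]
      have := hW t
      rw [hWdef] at this
      simp only [h1, h2] at this
      norm_num at this
  have cr2 : Continuous r2 := by
    rw [hr2def]; exact (cv1.pow 2).add (cv2.pow 2)
  -- the phase function φ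
  have cinv : Continuous (fun t => 1 / r2 t) :=
    continuous_const.div cr2 (fun t => (hr2 t).ne')
  set φ : ℝ → ℝ := fun t => ∫ x in (0:ℝ)..t, 1 / r2 x with hφdef
  have hφd : ∀ t, HasDerivAt φ (1 / r2 t) t := fun t => ftc_cont cinv t
  have cφ : Continuous φ := continuous_iff_continuousAt.mpr fun t => (hφd t).continuousAt
  have hφ0 : φ 0 = 0 := by rw [hφdef]; simp
  -- the logarithmic-derivative function lam
  set lam : ℝ → ℝ := fun t => (Φ t 0 0 * Φ t 1 0 + Φ t 0 1 * Φ t 1 1) / r2 t with hlamdef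
  have clam : Continuous lam := ((cv1.mul cv1').add (cv2.mul cv2')).div cr2 (fun t => (hr2 t).ne')
  set E : ℝ → ℝ := fun t => ∫ x in (0:ℝ)..t, lam x with hEdef
  have hEd : ∀ t, HasDerivAt E (lam t) t := fun t => ftc_cont clam t
  -- S := v₂ cos φ − v₁ sin φ satisfies S' = lam · S, S 0 = 0, hence S ≡ 0
  set S : ℝ → ℝ := fun t => Φ t 0 1 * Real.cos (φ t) - Φ t 0 0 * Real.sin (φ t) with hSdef
  have hSd : ∀ t, HasDerivAt S (lam t * S t) t := by
    intro t
    have hcos : HasDerivAt (fun s => Real.cos (φ s)) (-Real.sin (φ t) * (1 / r2 t)) t :=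
      (Real.hasDerivAt_cos (φ t)).comp t (hφd t)
    have hsin : HasDerivAt (fun s => Real.sin (φ s)) (Real.cos (φ t) * (1 / r2 t)) t :=
      (Real.hasDerivAt_sin (φ t)).comp t (hφd t)
    have h := ((hv2 t).mul hcos).sub ((hv1 t).mul hsin)
    convert h using 1 <;> try with_reducible_and_instances rfl
    have hWt := hW t
    rw [hWdef] at hWt
    simp only at hWt
    rw [hlamdef, hSdef]
    simp only
    have hr2ne : Φ t 0 0 ^ 2 + Φ t 0 1 ^ 2 ≠ 0 := by
      have := hr2 t
      rw [hr2def] at this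
      exact this.ne'
    rw [hr2def]
    simp only
    field_simp
    linear_combination (-(Φ t 0 0 * Real.cos (φ t) + Φ t 0 1 * Real.sin (φ t))) * hWt
  have hS : ∀ t, S t = 0 := by
    intro t
    set G : ℝ → ℝ := fun t => S t * Real.exp (-E t) with hGdef
    have hGd : ∀ x, HasDerivAt G 0 x := by
      intro x
      have hexp : HasDerivAt (fun s => Real.exp (-E s)) (Real.exp (-E x) * (-lam x)) x := by
        have := (Real.hasDerivAt_exp (-E x)).comp x ((hEd x).neg)
        convert this using 1 <;> try rfl
      have h := (hSd x).mul hexp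
      convert h using 1 <;> try with_reducible_and_instances rfl
      ring
    have hconst : G t = G 0 :=
      is_const_of_deriv_eq_zero (fun x => (hGd x).differentiableAt)
        (fun x => (hGd x).deriv) t 0
    have hS0 : S 0 = 0 := by
      rw [hSdef]; simp [hφ0, hΦ0, Matrix.one_apply]
    have hG0 : G 0 = 0 := by rw [hGdef]; simp [hS0]
    have h0 : S t * Real.exp (-E t) = 0 := hconst.trans hG0
    have hexpne : Real.exp (-E t) ≠ 0 := Real.exp_ne_zero _
    exact (mul_eq_zero.mp h0).resolve_right hexpne
  -- sin (θ − φ) = 0 on [0, 2π]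
  have hsin0 : ∀ t ∈ Icc (0:ℝ) (2 * π), Real.sin (θ t - φ t) = 0 := by
    intro t ht
    obtain ⟨R, hRpos, hp1, hp2⟩ :
        ∃ R : ℝ, 0 < R ∧ Φ t 0 0 = R * Real.cos (θ t) ∧ Φ t 0 1 = R * Real.sin (θ t) :=
      ⟨_, Real.sqrt_pos.mpr (hr2 t), (hpolar t ht).1, (hpolar t ht).2⟩
    have hSt := hS t
    rw [hSdef] at hSt
    simp only at hSt
    rw [hp1, hp2] at hSt
    rw [Real.sin_sub]
    have h0 : R * (Real.sin (θ t) * Real.cos (φ t) - Real.cos (θ t) * Real.sin (φ t)) = 0 := by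
      linear_combination hSt
    rcases mul_eq_zero.mp h0 with h | h
    · exact absurd h hRpos.ne'
    · exact h
  -- θ = φ on [0, 2π]
  have hθφ : ∀ t ∈ Icc (0:ℝ) (2 * π), θ t = φ t := by
    intro t ht
    by_contra hne
    have hgc : ContinuousOn (fun x => θ x - φ x) (Icc 0 (2*π)) := hθc.sub cφ.continuousOn
    have hg0 : θ 0 - φ 0 = 0 := by rw [hθ0, hφ0]; ring
    have hgt : θ t - φ t ≠ 0 := sub_ne_zero.mpr hne
    obtain ⟨n, hn⟩ := Real.sin_eq_zero_iff.mp (hsin0 t ht)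
    have hn0 : n ≠ 0 := by
      rintro rfl; simp at hn; exact hgt hn.symm
    have hgtabs : π ≤ |θ t - φ t| := by
      rw [← hn, abs_mul, abs_of_pos Real.pi_pos]
      have h1 : (1:ℝ) ≤ |(n:ℝ)| := by
        rw [← Int.cast_abs]
        exact_mod_cast Int.one_le_abs hn0
      nlinarith [Real.pi_pos]
    have hmem : Icc (0:ℝ) t ⊆ Icc 0 (2*π) := Icc_subset_Icc le_rfl ht.2
    have hgct : ContinuousOn (fun x => θ x - φ x) (Icc 0 t) := hgc.mono hmem
    rcases le_or_gt 0 (θ t - φ t) with hpos | hneg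
    · have h2 : π ≤ θ t - φ t := by rwa [abs_of_nonneg hpos] at hgtabs
      have hIcc : (π/2) ∈ Icc (θ 0 - φ 0) (θ t - φ t) := by
        rw [hθ0, hφ0]
        constructor
        · simp; linarith [Real.pi_pos]
        · linarith [Real.pi_pos]
      obtain ⟨u, hu, hgu⟩ := intermediate_value_Icc ht.1 hgct hIcc
      have hz := hsin0 u (hmem hu)
      simp only at hgu
      rw [hgu, Real.sin_pi_div_two] at hz
      norm_num at hz
    · have h2 : θ t - φ t ≤ -π := by
        rw [abs_of_neg hneg] at hgtabs; linarith
      have hIcc : (-(π/2)) ∈ Icc (θ t - φ t) (θ 0 - φ 0) := by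
        rw [hθ0, hφ0]
        constructor
        · linarith [Real.pi_pos]
        · simp; linarith [Real.pi_pos]
      obtain ⟨u, hu, hgu⟩ := intermediate_value_Icc' ht.1 hgct hIcc
      have hz := hsin0 u (hmem hu)
      simp only at hgu
      rw [hgu, Real.sin_neg, Real.sin_pi_div_two] at hz
      norm_num at hz
  -- membership of tm, tp
  have htm2 : tm ∈ Icc (0:ℝ) (2*π) := ⟨htm, le_trans htmp.le htp⟩
  have htp2 : tp ∈ Icc (0:ℝ) (2*π) := ⟨le_trans htm htmp.le, htp⟩
  -- monotonicity of φ
  have hφdiff : ∀ a b : ℝ, φ b - φ a = ∫ x in a..b, 1 / r2 x := by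
    intro a b
    have := intervalIntegral.integral_add_adjacent_intervals (μ := volume)
      (cinv.intervalIntegrable 0 a) (cinv.intervalIntegrable a b)
    rw [hφdef]
    simp only
    linarith [this]
  have hφlt : ∀ a b : ℝ, a < b → φ a < φ b := by
    intro a b hab
    have hp := intervalIntegral_pos_of_pos (f := fun x => 1 / r2 x)
      (cinv.intervalIntegrable a b) (fun x => by have := hr2 x; positivity) hab
    have := hφdiff a b
    linarith
  have hφle : ∀ a b : ℝ, a ≤ b → φ a ≤ φ b := by
    intro a b hab
    rcases eq_or_lt_of_le hab with rfl | h
    · exact le_rfl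
    · exact (hφlt a b h).le
  have hgap : φ tp - φ tm < π := by
    have h1 := hθφ tm htm2
    have h2 := hθφ tp htp2
    rw [h1, h2] at hθπ
    linarith
  -- positivity of the pairwise determinant d
  have hd : ∀ s t : ℝ, tm ≤ s → s < t → t ≤ tp →
      0 < Φ s 0 0 * Φ t 0 1 - Φ s 0 1 * Φ t 0 0 := by
    intro s t hs hst htle
    have hsI : s ∈ Icc (0:ℝ) (2*π) := ⟨le_trans htm hs, le_trans (le_trans hst.le htle) htp⟩
    have htI : t ∈ Icc (0:ℝ) (2*π) := ⟨le_trans (le_trans htm hs) hst.le, le_trans htle htp⟩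
    obtain ⟨Rs, hRs, hs1, hs2⟩ :
        ∃ R : ℝ, 0 < R ∧ Φ s 0 0 = R * Real.cos (θ s) ∧ Φ s 0 1 = R * Real.sin (θ s) :=
      ⟨_, Real.sqrt_pos.mpr (hr2 s), (hpolar s hsI).1, (hpolar s hsI).2⟩
    obtain ⟨Rt, hRt, ht1, ht2⟩ :
        ∃ R : ℝ, 0 < R ∧ Φ t 0 0 = R * Real.cos (θ t) ∧ Φ t 0 1 = R * Real.sin (θ t) :=
      ⟨_, Real.sqrt_pos.mpr (hr2 t), (hpolar t htI).1, (hpolar t htI).2⟩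
    have hkey : Φ s 0 0 * Φ t 0 1 - Φ s 0 1 * Φ t 0 0 = Rs * Rt * Real.sin (φ t - φ s) := by
      rw [hs1, hs2, ht1, ht2, hθφ s hsI, hθφ t htI, Real.sin_sub]
      ring
    rw [hkey]
    have h1 : 0 < φ t - φ s := sub_pos.mpr (hφlt s t hst)
    have h2 : φ t - φ s < π := by
      have := hφle tm s hs
      have := hφle t tp htle
      linarith [hgap]
    exact mul_pos (mul_pos hRs hRt) (Real.sin_pos_of_pos_of_lt_pi h1 h2)
  -- unpack bump data
  have cℓ1 : Continuous ℓ₁ := hℓ₁.1.continuous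
  have cℓ2 : Continuous ℓ₂ := hℓ₂.1.continuous
  have cℓ3 : Continuous ℓ₃ := hℓ₃.1.continuous
  have hnn1 := hℓ₁.2.1
  have hnn2 := hℓ₂.2.1
  have hnn3 := hℓ₃.2.1
  have hne1 := hℓ₁.2.2.1
  have hne2 := hℓ₂.2.2.1
  have hne3 := hℓ₃.2.2.1
  obtain ⟨a1, b1, hab1, hsub1, hts1⟩ := hℓ₁.2.2.2
  obtain ⟨a2, b2, hab2, hsub2, hts2⟩ := hℓ₂.2.2.2
  obtain ⟨a3, b3, hab3, hsub3, hts3⟩ := hℓ₃.2.2.2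
  have hsupIcc : Icc tm tp ⊆ Icc (0:ℝ) (2*π) := Icc_subset_Icc htm htp
  have hsup1 : tsupport ℓ₁ ⊆ Icc tm tp := hts1 ▸ hsub1
  have hsup2 : tsupport ℓ₂ ⊆ Icc tm tp := hts2 ▸ hsub2
  have hsup3 : tsupport ℓ₃ ⊆ Icc tm tp := hts3 ▸ hsub3
  have hsup1' : tsupport ℓ₁ ⊆ Icc (0:ℝ) (2*π) := hsup1.trans hsupIcc
  have hsup2' : tsupport ℓ₂ ⊆ Icc (0:ℝ) (2*π) := hsup2.trans hsupIcc
  have hsup3' : tsupport ℓ₃ ⊆ Icc (0:ℝ) (2*π) := hsup3.trans hsupIcc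
  -- constant sign of d on products of supports
  have hsigma : ∀ (f g : ℝ → ℝ) (af bf ag bg : ℝ), af ≤ bf → ag ≤ bg →
      tsupport f = Icc af bf → tsupport g = Icc ag bg →
      tsupport f ⊆ Icc tm tp → tsupport g ⊆ Icc tm tp →
      Disjoint (tsupport f) (tsupport g) →
      ∃ σ : ℝ, ∀ s ∈ tsupport f, ∀ t ∈ tsupport g,
        0 < σ * (Φ s 0 0 * Φ t 0 1 - Φ s 0 1 * Φ t 0 0) := by
    intro f g af bf ag bg habf habg hf hg hfs hgs hdisj
    have horder : bf < ag ∨ bg < af := by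
      by_contra hco
      push_neg at hco
      obtain ⟨h1, h2⟩ := hco
      have hmem1 : max af ag ∈ tsupport f := by
        rw [hf]; exact ⟨le_max_left _ _, max_le habf h1⟩
      have hmem2 : max af ag ∈ tsupport g := by
        rw [hg]; exact ⟨le_max_right _ _, max_le h2 habg⟩
      exact (Set.disjoint_left.mp hdisj hmem1) hmem2
    rcases horder with h | h
    · refine ⟨1, fun s hs t ht => ?_⟩
      have hst : s < t := by
        have h1 : s ≤ bf := by rw [hf] at hs; exact hs.2
        have h2 : ag ≤ t := by rw [hg] at ht; exact ht.1
        linarith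
      have := hd s t (hfs hs).1 hst (hgs ht).2
      linarith
    · refine ⟨-1, fun s hs t ht => ?_⟩
      have hst : t < s := by
        have h1 : t ≤ bg := by rw [hg] at ht; exact ht.2
        have h2 : af ≤ s := by rw [hf] at hs; exact hs.1
        linarith
      have hpos := hd t s (hgs ht).1 hst (hfs hs).2
      nlinarith [hpos]
  obtain ⟨σ12, hσ12⟩ := hsigma ℓ₁ ℓ₂ a1 b1 a2 b2 hab1 hab2 hts1 hts2 hsup1 hsup2 hd₁₂
  obtain ⟨σ13, hσ13⟩ := hsigma ℓ₁ ℓ₃ a1 b1 a3 b3 hab1 hab3 hts1 hts3 hsup1 hsup3 hd₁₃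
  obtain ⟨σ23, hσ23⟩ := hsigma ℓ₂ ℓ₃ a2 b2 a3 b3 hab2 hab3 hts2 hts3 hsup2 hsup3 hd₂₃
  -- the three iterated-integral identities
  have hE3 : ∀ s t : ℝ,
      (∫ u in (0:ℝ)..(2*π), ℓ₃ u * ((Φ s 0 0 * Φ u 0 1 - Φ s 0 1 * Φ u 0 0) * (Φ t 0 0 * Φ u 0 1 - Φ t 0 1 * Φ u 0 0)))
        = (Φ s 0 1 * Φ t 0 1) * (∫ s in (0:ℝ)..(2*π), ℓ₃ s * Φ s 0 0 ^ 2) + (-(Φ s 0 0 * Φ t 0 1 + Φ s 0 1 * Φ t 0 0)) * (∫ s in (0:ℝ)..(2*π), ℓ₃ s * (Φ s 0 0 * Φ s 0 1)) + (Φ s 0 0 * Φ t 0 0) * (∫ s in (0:ℝ)..(2*π), ℓ₃ s * Φ s 0 1 ^ 2) :=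
    fun s t => integral_comb3 ℓ₃ (fun u => Φ u 0 0 ^ 2) (fun u => Φ u 0 0 * Φ u 0 1)
      (fun u => Φ u 0 1 ^ 2) _ (Φ s 0 1 * Φ t 0 1) (-(Φ s 0 0 * Φ t 0 1 + Φ s 0 1 * Φ t 0 0)) (Φ s 0 0 * Φ t 0 0) cℓ3 (cv1.pow 2) (cv1.mul cv2) (cv2.pow 2)
      (fun u => by ring)
  have hF : ∀ s : ℝ,
      (∫ t in (0:ℝ)..(2*π), ℓ₂ t * ((Φ s 0 0 * Φ t 0 1 - Φ s 0 1 * Φ t 0 0) * ((Φ s 0 1 * Φ t 0 1) * (∫ s in (0:ℝ)..(2*π), ℓ₃ s * Φ s 0 0 ^ 2) + (-(Φ s 0 0 * Φ t 0 1 + Φ s 0 1 * Φ t 0 0)) * (∫ s in (0:ℝ)..(2*π), ℓ₃ s * (Φ s 0 0 * Φ s 0 1)) + (Φ s 0 0 * Φ t 0 0) * (∫ s in (0:ℝ)..(2*π), ℓ₃ s * Φ s 0 1 ^ 2))))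
        = (((∫ s in (0:ℝ)..(2*π), ℓ₃ s * (Φ s 0 0 * Φ s 0 1))) * Φ s 0 1 ^ 2 - ((∫ s in (0:ℝ)..(2*π), ℓ₃ s * Φ s 0 1 ^ 2)) * (Φ s 0 0 * Φ s 0 1)) * (∫ s in (0:ℝ)..(2*π), ℓ₂ s * Φ s 0 0 ^ 2) + (-((∫ s in (0:ℝ)..(2*π), ℓ₃ s * Φ s 0 0 ^ 2)) * Φ s 0 1 ^ 2 + ((∫ s in (0:ℝ)..(2*π), ℓ₃ s * Φ s 0 1 ^ 2)) * Φ s 0 0 ^ 2) * (∫ s in (0:ℝ)..(2*π), ℓ₂ s * (Φ s 0 0 * Φ s 0 1)) + (((∫ s in (0:ℝ)..(2*π), ℓ₃ s * Φ s 0 0 ^ 2)) * (Φ s 0 0 * Φ s 0 1) - ((∫ s in (0:ℝ)..(2*π), ℓ₃ s * (Φ s 0 0 * Φ s 0 1))) * Φ s 0 0 ^ 2) * (∫ s in (0:ℝ)..(2*π), ℓ₂ s * Φ s 0 1 ^ 2) :=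
    fun s => integral_comb3 ℓ₂ (fun t => Φ t 0 0 ^ 2) (fun t => Φ t 0 0 * Φ t 0 1)
      (fun t => Φ t 0 1 ^ 2) _ (((∫ s in (0:ℝ)..(2*π), ℓ₃ s * (Φ s 0 0 * Φ s 0 1))) * Φ s 0 1 ^ 2 - ((∫ s in (0:ℝ)..(2*π), ℓ₃ s * Φ s 0 1 ^ 2)) * (Φ s 0 0 * Φ s 0 1)) (-((∫ s in (0:ℝ)..(2*π), ℓ₃ s * Φ s 0 0 ^ 2)) * Φ s 0 1 ^ 2 + ((∫ s in (0:ℝ)..(2*π), ℓ₃ s * Φ s 0 1 ^ 2)) * Φ s 0 0 ^ 2) (((∫ s in (0:ℝ)..(2*π), ℓ₃ s * Φ s 0 0 ^ 2)) * (Φ s 0 0 * Φ s 0 1) - ((∫ s in (0:ℝ)..(2*π), ℓ₃ s * (Φ s 0 0 * Φ s 0 1))) * Φ s 0 0 ^ 2) cℓ2 (cv1.pow 2) (cv1.mul cv2) (cv2.pow 2)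
      (fun t => by ring)
  have hIter :
      (∫ s in (0:ℝ)..(2*π), ℓ₁ s * ((((∫ s in (0:ℝ)..(2*π), ℓ₃ s * (Φ s 0 0 * Φ s 0 1))) * Φ s 0 1 ^ 2 - ((∫ s in (0:ℝ)..(2*π), ℓ₃ s * Φ s 0 1 ^ 2)) * (Φ s 0 0 * Φ s 0 1)) * (∫ s in (0:ℝ)..(2*π), ℓ₂ s * Φ s 0 0 ^ 2) + (-((∫ s in (0:ℝ)..(2*π), ℓ₃ s * Φ s 0 0 ^ 2)) * Φ s 0 1 ^ 2 + ((∫ s in (0:ℝ)..(2*π), ℓ₃ s * Φ s 0 1 ^ 2)) * Φ s 0 0 ^ 2) * (∫ s in (0:ℝ)..(2*π), ℓ₂ s * (Φ s 0 0 * Φ s 0 1)) + (((∫ s in (0:ℝ)..(2*π), ℓ₃ s * Φ s 0 0 ^ 2)) * (Φ s 0 0 * Φ s 0 1) - ((∫ s in (0:ℝ)..(2*π), ℓ₃ s * (Φ s 0 0 * Φ s 0 1))) * Φ s 0 0 ^ 2) * (∫ s in (0:ℝ)..(2*π), ℓ₂ s * Φ s 0 1 ^ 2)))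
        = (((∫ s in (0:ℝ)..(2*π), ℓ₃ s * Φ s 0 1 ^ 2)) * ((∫ s in (0:ℝ)..(2*π), ℓ₂ s * (Φ s 0 0 * Φ s 0 1))) - ((∫ s in (0:ℝ)..(2*π), ℓ₃ s * (Φ s 0 0 * Φ s 0 1))) * ((∫ s in (0:ℝ)..(2*π), ℓ₂ s * Φ s 0 1 ^ 2))) * (∫ s in (0:ℝ)..(2*π), ℓ₁ s * Φ s 0 0 ^ 2) + (((∫ s in (0:ℝ)..(2*π), ℓ₃ s * Φ s 0 0 ^ 2)) * ((∫ s in (0:ℝ)..(2*π), ℓ₂ s * Φ s 0 1 ^ 2)) - ((∫ s in (0:ℝ)..(2*π), ℓ₃ s * Φ s 0 1 ^ 2)) * ((∫ s in (0:ℝ)..(2*π), ℓ₂ s * Φ s 0 0 ^ 2))) * (∫ s in (0:ℝ)..(2*π), ℓ₁ s * (Φ s 0 0 * Φ s 0 1)) + (((∫ s in (0:ℝ)..(2*π), ℓ₃ s * (Φ s 0 0 * Φ s 0 1))) * ((∫ s in (0:ℝ)..(2*π), ℓ₂ s * Φ s 0 0 ^ 2)) - ((∫ s in (0:ℝ)..(2*π),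 ℓ₃ s * Φ s 0 0 ^ 2)) * ((∫ s in (0:ℝ)..(2*π), ℓ₂ s * (Φ s 0 0 * Φ s 0 1)))) * (∫ s in (0:ℝ)..(2*π), ℓ₁ s * Φ s 0 1 ^ 2) :=
    integral_comb3 ℓ₁ (fun s => Φ s 0 0 ^ 2) (fun s => Φ s 0 0 * Φ s 0 1)
      (fun s => Φ s 0 1 ^ 2) _ (((∫ s in (0:ℝ)..(2*π), ℓ₃ s * Φ s 0 1 ^ 2)) * ((∫ s in (0:ℝ)..(2*π), ℓ₂ s * (Φ s 0 0 * Φ s 0 1))) - ((∫ s in (0:ℝ)..(2*π), ℓ₃ s * (Φ s 0 0 * Φ s 0 1))) * ((∫ s in (0:ℝ)..(2*π), ℓ₂ s * Φ s 0 1 ^ 2))) (((∫ s in (0:ℝ)..(2*π), ℓ₃ s * Φ s 0 0 ^ 2)) * ((∫ s in (0:ℝ)..(2*π), ℓ₂ s * Φ s 0 1 ^ 2)) - ((∫ s in (0:ℝ)..(2*π), ℓ₃ s * Φ s 0 1 ^ 2)) * ((∫ s in (0:ℝ)..(2*π), ℓ₂ s * Φ s 0 0 ^ 2))) (((∫ s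 in (0:ℝ)..(2*π), ℓ₃ s * (Φ s 0 0 * Φ s 0 1))) * ((∫ s in (0:ℝ)..(2*π), ℓ₂ s * Φ s 0 0 ^ 2)) - ((∫ s in (0:ℝ)..(2*π), ℓ₃ s * Φ s 0 0 ^ 2)) * ((∫ s in (0:ℝ)..(2*π), ℓ₂ s * (Φ s 0 0 * Φ s 0 1)))) cℓ1 (cv1.pow 2) (cv1.mul cv2) (cv2.pow 2)
      (fun s => by ring)
  -- positivity at the innermost level
  have hpos3 : ∀ s ∈ tsupport ℓ₁, ∀ t ∈ tsupport ℓ₂,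
      0 < (σ13 * σ23) * ((Φ s 0 1 * Φ t 0 1) * (∫ s in (0:ℝ)..(2*π), ℓ₃ s * Φ s 0 0 ^ 2) + (-(Φ s 0 0 * Φ t 0 1 + Φ s 0 1 * Φ t 0 0)) * (∫ s in (0:ℝ)..(2*π), ℓ₃ s * (Φ s 0 0 * Φ s 0 1)) + (Φ s 0 0 * Φ t 0 0) * (∫ s in (0:ℝ)..(2*π), ℓ₃ s * Φ s 0 1 ^ 2)) := by
    intro s hs t ht
    have h1 : 0 < ∫ u in (0:ℝ)..(2*π), ℓ₃ u * ((σ13 * σ23) * ((Φ s 0 0 * Φ u 0 1 - Φ s 0 1 * Φ u 0 0) * (Φ t 0 0 * Φ u 0 1 - Φ t 0 1 * Φ u 0 0))) := by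
      refine integral_pos_of_bump cℓ3 hnn3 hne3 hsup3' ?_ ?_
      · fun_prop
      · intro u hu
        have p1 := hσ13 s hs u hu
        have p2 := hσ23 t ht u hu
        nlinarith [mul_pos p1 p2]
    have h2 : (∫ u in (0:ℝ)..(2*π), ℓ₃ u * ((σ13 * σ23) * ((Φ s 0 0 * Φ u 0 1 - Φ s 0 1 * Φ u 0 0) * (Φ t 0 0 * Φ u 0 1 - Φ t 0 1 * Φ u 0 0))))
        = (σ13 * σ23) * ∫ u in (0:ℝ)..(2*π), ℓ₃ u * ((Φ s 0 0 * Φ u 0 1 - Φ s 0 1 * Φ u 0 0) * (Φ t 0 0 * Φ u 0 1 - Φ t 0 1 * Φ u 0 0)) := by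
      rw [← intervalIntegral.integral_const_mul]
      congr 1
      funext u
      ring
    rw [h2, hE3 s t] at h1
    exact h1
  -- positivity at the middle level
  have hposF : ∀ s ∈ tsupport ℓ₁,
      0 < (σ12 * (σ13 * σ23)) * ((((∫ s in (0:ℝ)..(2*π), ℓ₃ s * (Φ s 0 0 * Φ s 0 1))) * Φ s 0 1 ^ 2 - ((∫ s in (0:ℝ)..(2*π), ℓ₃ s * Φ s 0 1 ^ 2)) * (Φ s 0 0 * Φ s 0 1)) * (∫ s in (0:ℝ)..(2*π), ℓ₂ s * Φ s 0 0 ^ 2) + (-((∫ s in (0:ℝ)..(2*π), ℓ₃ s * Φ s 0 0 ^ 2)) * Φ s 0 1 ^ 2 + ((∫ s in (0:ℝ)..(2*π), ℓ₃ s * Φ s 0 1 ^ 2)) * Φ s 0 0 ^ 2) * (∫ s in (0:ℝ)..(2*π), ℓ₂ s * (Φ s 0 0 * Φ s 0 1)) + (((∫ s in (0:ℝ)..(2*π), ℓ₃ s * Φ s 0 0 ^ 2)) * (Φ s 0 0 * Φ s 0 1) - ((∫ s in (0:ℝ)..(2*π), ℓ₃ s * (Φ s 0 0 * Φ s 0 1)))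 * Φ s 0 0 ^ 2) * (∫ s in (0:ℝ)..(2*π), ℓ₂ s * Φ s 0 1 ^ 2)) := by
    intro s hs
    have h1 : 0 < ∫ t in (0:ℝ)..(2*π),
        ℓ₂ t * ((σ12 * (σ13 * σ23)) * ((Φ s 0 0 * Φ t 0 1 - Φ s 0 1 * Φ t 0 0) * ((Φ s 0 1 * Φ t 0 1) * (∫ s in (0:ℝ)..(2*π), ℓ₃ s * Φ s 0 0 ^ 2) + (-(Φ s 0 0 * Φ t 0 1 + Φ s 0 1 * Φ t 0 0)) * (∫ s in (0:ℝ)..(2*π), ℓ₃ s * (Φ s 0 0 * Φ s 0 1)) + (Φ s 0 0 * Φ t 0 0) * (∫ s in (0:ℝ)..(2*π), ℓ₃ s * Φ s 0 1 ^ 2)))) := by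
      refine integral_pos_of_bump cℓ2 hnn2 hne2 hsup2' ?_ ?_
      · fun_prop
      · intro t ht
        have p1 := hσ12 s hs t ht
        have p2 := hpos3 s hs t ht
        nlinarith [mul_pos p1 p2]
    have h2 : (∫ t in (0:ℝ)..(2*π),
        ℓ₂ t * ((σ12 * (σ13 * σ23)) * ((Φ s 0 0 * Φ t 0 1 - Φ s 0 1 * Φ t 0 0) * ((Φ s 0 1 * Φ t 0 1) * (∫ s in (0:ℝ)..(2*π), ℓ₃ s * Φ s 0 0 ^ 2) + (-(Φ s 0 0 * Φ t 0 1 + Φ s 0 1 * Φ t 0 0)) * (∫ s in (0:ℝ)..(2*π), ℓ₃ s * (Φ s 0 0 * Φ s 0 1)) + (Φ s 0 0 * Φ t 0 0) * (∫ s in (0:ℝ)..(2*π), ℓ₃ s * Φ s 0 1 ^ 2)))))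
        = (σ12 * (σ13 * σ23)) * ∫ t in (0:ℝ)..(2*π),
            ℓ₂ t * ((Φ s 0 0 * Φ t 0 1 - Φ s 0 1 * Φ t 0 0) * ((Φ s 0 1 * Φ t 0 1) * (∫ s in (0:ℝ)..(2*π), ℓ₃ s * Φ s 0 0 ^ 2) + (-(Φ s 0 0 * Φ t 0 1 + Φ s 0 1 * Φ t 0 0)) * (∫ s in (0:ℝ)..(2*π), ℓ₃ s * (Φ s 0 0 * Φ s 0 1)) + (Φ s 0 0 * Φ t 0 0) * (∫ s in (0:ℝ)..(2*π), ℓ₃ s * Φ s 0 1 ^ 2))) := by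
      rw [← intervalIntegral.integral_const_mul]
      congr 1
      funext t
      ring
    rw [h2, hF s] at h1
    exact h1
  -- positivity at the outer level
  have hposIter : 0 < (σ12 * (σ13 * σ23)) * ((((∫ s in (0:ℝ)..(2*π), ℓ₃ s * Φ s 0 1 ^ 2)) * ((∫ s in (0:ℝ)..(2*π), ℓ₂ s * (Φ s 0 0 * Φ s 0 1))) - ((∫ s in (0:ℝ)..(2*π), ℓ₃ s * (Φ s 0 0 * Φ s 0 1))) * ((∫ s in (0:ℝ)..(2*π), ℓ₂ s * Φ s 0 1 ^ 2))) * (∫ s in (0:ℝ)..(2*π), ℓ₁ s * Φ s 0 0 ^ 2) + (((∫ s in (0:ℝ)..(2*π), ℓ₃ s * Φ s 0 0 ^ 2)) * ((∫ s in (0:ℝ)..(2*π), ℓ₂ s * Φ s 0 1 ^ 2)) - ((∫ s in (0:ℝ)..(2*π), ℓ₃ s * Φ s 0 1 ^ 2)) * ((∫ s in (0:ℝ)..(2*π), ℓ₂ s * Φ s 0 0 ^ 2))) * (∫ s in (0:ℝ)..(2*π), ℓ₁ s * (Φ s 0 0 * Φ s 0 1)) + (((∫ s in (0:ℝ)..(2*π),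 ℓ₃ s * (Φ s 0 0 * Φ s 0 1))) * ((∫ s in (0:ℝ)..(2*π), ℓ₂ s * Φ s 0 0 ^ 2)) - ((∫ s in (0:ℝ)..(2*π), ℓ₃ s * Φ s 0 0 ^ 2)) * ((∫ s in (0:ℝ)..(2*π), ℓ₂ s * (Φ s 0 0 * Φ s 0 1)))) * (∫ s in (0:ℝ)..(2*π), ℓ₁ s * Φ s 0 1 ^ 2)) := by
    have h1 : 0 < ∫ s in (0:ℝ)..(2*π),
        ℓ₁ s * ((σ12 * (σ13 * σ23)) * ((((∫ s in (0:ℝ)..(2*π), ℓ₃ s * (Φ s 0 0 * Φ s 0 1))) * Φ s 0 1 ^ 2 - ((∫ s in (0:ℝ)..(2*π), ℓ₃ s * Φ s 0 1 ^ 2)) * (Φ s 0 0 * Φ s 0 1)) * (∫ s in (0:ℝ)..(2*π), ℓ₂ s * Φ s 0 0 ^ 2) + (-((∫ s in (0:ℝ)..(2*π), ℓ₃ s * Φ s 0 0 ^ 2)) * Φ s 0 1 ^ 2 + ((∫ s in (0:ℝ)..(2*π), ℓ₃ s * Φ s 0 1 ^ 2)) * Φ s 0 0 ^ 2) * (∫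 s in (0:ℝ)..(2*π), ℓ₂ s * (Φ s 0 0 * Φ s 0 1)) + (((∫ s in (0:ℝ)..(2*π), ℓ₃ s * Φ s 0 0 ^ 2)) * (Φ s 0 0 * Φ s 0 1) - ((∫ s in (0:ℝ)..(2*π), ℓ₃ s * (Φ s 0 0 * Φ s 0 1))) * Φ s 0 0 ^ 2) * (∫ s in (0:ℝ)..(2*π), ℓ₂ s * Φ s 0 1 ^ 2))) := by
      refine integral_pos_of_bump cℓ1 hnn1 hne1 hsup1' ?_ ?_
      · fun_prop
      · intro s hs
        exact hposF s hs
    have h2 : (∫ s in (0:ℝ)..(2*π),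
        ℓ₁ s * ((σ12 * (σ13 * σ23)) * ((((∫ s in (0:ℝ)..(2*π), ℓ₃ s * (Φ s 0 0 * Φ s 0 1))) * Φ s 0 1 ^ 2 - ((∫ s in (0:ℝ)..(2*π), ℓ₃ s * Φ s 0 1 ^ 2)) * (Φ s 0 0 * Φ s 0 1)) * (∫ s in (0:ℝ)..(2*π), ℓ₂ s * Φ s 0 0 ^ 2) + (-((∫ s in (0:ℝ)..(2*π), ℓ₃ s * Φ s 0 0 ^ 2)) * Φ s 0 1 ^ 2 + ((∫ s in (0:ℝ)..(2*π), ℓ₃ s * Φ s 0 1 ^ 2)) * Φ s 0 0 ^ 2) * (∫ s in (0:ℝ)..(2*π), ℓ₂ s * (Φ s 0 0 * Φ s 0 1)) + (((∫ s in (0:ℝ)..(2*π), ℓ₃ s * Φ s 0 0 ^ 2)) * (Φ s 0 0 * Φ s 0 1) - ((∫ s in (0:ℝ)..(2*π), ℓ₃ s * (Φ s 0 0 * Φ s 0 1))) * Φ s 0 0 ^ 2) * (∫ s in (0:ℝ)..(2*π), ℓ₂ s * Φ s 0 1 ^ 2))))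
        = (σ12 * (σ13 * σ23)) * ∫ s in (0:ℝ)..(2*π),
            ℓ₁ s * ((((∫ s in (0:ℝ)..(2*π), ℓ₃ s * (Φ s 0 0 * Φ s 0 1))) * Φ s 0 1 ^ 2 - ((∫ s in (0:ℝ)..(2*π), ℓ₃ s * Φ s 0 1 ^ 2)) * (Φ s 0 0 * Φ s 0 1)) * (∫ s in (0:ℝ)..(2*π), ℓ₂ s * Φ s 0 0 ^ 2) + (-((∫ s in (0:ℝ)..(2*π), ℓ₃ s * Φ s 0 0 ^ 2)) * Φ s 0 1 ^ 2 + ((∫ s in (0:ℝ)..(2*π), ℓ₃ s * Φ s 0 1 ^ 2)) * Φ s 0 0 ^ 2) * (∫ s in (0:ℝ)..(2*π), ℓ₂ s * (Φ s 0 0 * Φ s 0 1)) + (((∫ s in (0:ℝ)..(2*π), ℓ₃ s * Φ s 0 0 ^ 2)) * (Φ s 0 0 * Φ s 0 1) - ((∫ s in (0:ℝ)..(2*π), ℓ₃ s * (Φ s 0 0 * Φ s 0 1))) * Φ s 0 0 ^ 2) * (∫ s in (0:ℝ)..(2*π), ℓ₂ s * Φ s 0 1 ^ 2)) := by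
      rw [← intervalIntegral.integral_const_mul]
      congr 1
      funext s
      ring
    rw [h2, hIter] at h1
    exact h1
  -- entrywise formula for monInt
  have hdet2 : ∀ t : ℝ, (Φ t).det = 1 := by
    intro t
    rw [Matrix.det_fin_two]
    exact hW t
  have hmat : ∀ t : ℝ, (Φ t)⁻¹ * N0 * Φ t =
      !![-(Φ t 0 0 * Φ t 0 1), -(Φ t 0 1 ^ 2); Φ t 0 0 ^ 2, Φ t 0 0 * Φ t 0 1] := by
    intro t
    have hinv : (Φ t)⁻¹ = !![Φ t 1 1, -(Φ t 0 1); -(Φ t 1 0), Φ t 0 0] := by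
      rw [Matrix.inv_def, Matrix.adjugate_fin_two, hdet2 t]
      simp
    rw [hinv]
    ext i j
    fin_cases i <;> fin_cases j <;>
      simp [Matrix.mul_apply, Fin.sum_univ_two, N0] <;> ring
  have hmon : ∀ ℓ : ℝ → ℝ, Continuous ℓ → monInt ℓ Φ =
      !![-(∫ t in (0:ℝ)..(2*π), ℓ t * (Φ t 0 0 * Φ t 0 1)),
         -(∫ t in (0:ℝ)..(2*π), ℓ t * Φ t 0 1 ^ 2);
         ∫ t in (0:ℝ)..(2*π), ℓ t * Φ t 0 0 ^ 2,
         ∫ t in (0:ℝ)..(2*π), ℓ t * (Φ t 0 0 * Φ t 0 1)] := by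
    intro ℓ hc
    ext i j
    fin_cases i <;> fin_cases j
    · show (∫ t in (0:ℝ)..(2*π), ℓ t * (((Φ t)⁻¹ * N0 * Φ t) 0 0)) = _
      have e : ∀ t : ℝ, ℓ t * (((Φ t)⁻¹ * N0 * Φ t) 0 0) = -(ℓ t * (Φ t 0 0 * Φ t 0 1)) := by
        intro t; rw [hmat t]; simp
      simp_rw [e]
      rw [intervalIntegral.integral_neg]
      simp
    · show (∫ t in (0:ℝ)..(2*π), ℓ t * (((Φ t)⁻¹ * N0 * Φ t) 0 1)) = _
      have e : ∀ t : ℝ, ℓ t * (((Φ t)⁻¹ * N0 * Φ t) 0 1) = -(ℓ t * Φ t 0 1 ^ 2) := by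
        intro t; rw [hmat t]; simp
      simp_rw [e]
      rw [intervalIntegral.integral_neg]
      simp
    · show (∫ t in (0:ℝ)..(2*π), ℓ t * (((Φ t)⁻¹ * N0 * Φ t) 1 0)) = _
      have e : ∀ t : ℝ, ℓ t * (((Φ t)⁻¹ * N0 * Φ t) 1 0) = ℓ t * Φ t 0 0 ^ 2 := by
        intro t; rw [hmat t]; simp
      simp_rw [e]
      simp
    · show (∫ t in (0:ℝ)..(2*π), ℓ t * (((Φ t)⁻¹ * N0 * Φ t) 1 1)) = _
      have e : ∀ t : ℝ, ℓ t * (((Φ t)⁻¹ * N0 * Φ t) 1 1) = ℓ t * (Φ t 0 0 * Φ t 0 1) := by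
        intro t; rw [hmat t]; simp
      simp_rw [e]
      simp
  -- finish: linear independence
  rw [Fintype.linearIndependent_iff]
  intro g hg
  rw [Fin.sum_univ_three] at hg
  simp only [Matrix.cons_val_zero, Matrix.cons_val_one, Matrix.head_cons,
    Matrix.cons_val_two, Matrix.tail_cons] at hg
  rw [hmon ℓ₁ cℓ1, hmon ℓ₂ cℓ2, hmon ℓ₃ cℓ3] at hg
  have e1 : g 0 * (∫ s in (0:ℝ)..(2*π), ℓ₁ s * Φ s 0 0 ^ 2) + g 1 * (∫ s in (0:ℝ)..(2*π), ℓ₂ s * Φ s 0 0 ^ 2) + g 2 * (∫ s in (0:ℝ)..(2*π), ℓ₃ s * Φ s 0 0 ^ 2) = 0 := by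
    have := congr_fun (congr_fun hg 1) 0
    simpa using this
  have e2 : g 0 * (∫ s in (0:ℝ)..(2*π), ℓ₁ s * (Φ s 0 0 * Φ s 0 1)) + g 1 * (∫ s in (0:ℝ)..(2*π), ℓ₂ s * (Φ s 0 0 * Φ s 0 1)) + g 2 * (∫ s in (0:ℝ)..(2*π), ℓ₃ s * (Φ s 0 0 * Φ s 0 1)) = 0 := by
    have := congr_fun (congr_fun hg 1) 1
    simpa using this
  have e3 : g 0 * (∫ s in (0:ℝ)..(2*π), ℓ₁ s * Φ s 0 1 ^ 2) + g 1 * (∫ s in (0:ℝ)..(2*π), ℓ₂ s * Φ s 0 1 ^ 2) + g 2 * (∫ s in (0:ℝ)..(2*π), ℓ₃ s * Φ s 0 1 ^ 2) = 0 := by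
    have := congr_fun (congr_fun hg 0) 1
    have h' := this
    simp at h'
    linarith [h']
  set B : Matrix (Fin 3) (Fin 3) ℝ :=
    !![(∫ s in (0:ℝ)..(2*π), ℓ₁ s * Φ s 0 0 ^ 2), (∫ s in (0:ℝ)..(2*π), ℓ₂ s * Φ s 0 0 ^ 2), (∫ s in (0:ℝ)..(2*π), ℓ₃ s * Φ s 0 0 ^ 2); (∫ s in (0:ℝ)..(2*π), ℓ₁ s * (Φ s 0 0 * Φ s 0 1)), (∫ s in (0:ℝ)..(2*π), ℓ₂ s * (Φ s 0 0 * Φ s 0 1)), (∫ s in (0:ℝ)..(2*π), ℓ₃ s * (Φ s 0 0 * Φ s 0 1)); (∫ s in (0:ℝ)..(2*π), ℓ₁ s * Φ s 0 1 ^ 2), (∫ s in (0:ℝ)..(2*π), ℓ₂ s * Φ s 0 1 ^ 2), (∫ s in (0:ℝ)..(2*π), ℓ₃ s * Φ s 0 1 ^ 2)] with hBdef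
  have hdetB : B.det = (((∫ s in (0:ℝ)..(2*π), ℓ₃ s * Φ s 0 1 ^ 2)) * ((∫ s in (0:ℝ)..(2*π), ℓ₂ s * (Φ s 0 0 * Φ s 0 1))) - ((∫ s in (0:ℝ)..(2*π), ℓ₃ s * (Φ s 0 0 * Φ s 0 1))) * ((∫ s in (0:ℝ)..(2*π), ℓ₂ s * Φ s 0 1 ^ 2))) * (∫ s in (0:ℝ)..(2*π), ℓ₁ s * Φ s 0 0 ^ 2) + (((∫ s in (0:ℝ)..(2*π), ℓ₃ s * Φ s 0 0 ^ 2)) * ((∫ s in (0:ℝ)..(2*π), ℓ₂ s * Φ s 0 1 ^ 2)) - ((∫ s in (0:ℝ)..(2*π), ℓ₃ s * Φ s 0 1 ^ 2)) * ((∫ s in (0:ℝ)..(2*π), ℓ₂ s * Φ s 0 0 ^ 2))) * (∫ s in (0:ℝ)..(2*π), ℓ₁ s * (Φ s 0 0 * Φ s 0 1)) + (((∫ s in (0:ℝ)..(2*π), ℓ₃ s * (Φ s 0 0 * Φ s 0 1))) * ((∫ s in (0:ℝ)..(2*π), ℓ₂ s * Φ s 0 0 ^ 2)) - ((∫ s in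 (0:ℝ)..(2*π), ℓ₃ s * Φ s 0 0 ^ 2)) * ((∫ s in (0:ℝ)..(2*π), ℓ₂ s * (Φ s 0 0 * Φ s 0 1)))) * (∫ s in (0:ℝ)..(2*π), ℓ₁ s * Φ s 0 1 ^ 2) := by
    rw [hBdef, Matrix.det_fin_three]
    simp
    ring
  have hBne : B.det ≠ 0 := by
    intro h0
    rw [hdetB] at h0
    rw [h0] at hposIter
    simp at hposIter
  have hmv : B.mulVec ![g 0, g 1, g 2] = 0 := by
    funext i
    fin_cases i <;>
      simp [hBdef, Matrix.mulVec, dotProduct, Fin.sum_univ_three] <;>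
      linarith [e1, e2, e3]
  have hzero : ![g 0, g 1, g 2] = 0 := Matrix.eq_zero_of_mulVec_eq_zero hBne hmv
  intro i
  fin_cases i
  · exact congr_fun hzero 0
  · exact congr_fun hzero 1
  · exact congr_fun hzero 2
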